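/- Every n-vertex m-edge graph G with degeneracy d satisfies MAG(G) ≤ n + d·m. -/

import Mathlib

/-- An injection `f : V(G) → ℤ⁺` is antimagic if distinct edges have distinct label sums. -/
def IsAntimagic {V : Type*} (G : SimpleGraph V) (f : V → ℕ) : Prop :=
  ∀ v w x y : V, G.Adj v w → G.Adj x y → s(v, w) ≠ s(x, y) → f v + f w ≠ f x + f y

/-- `MAG G`: the minimum `k` such that `G` has an antimagic injection into `{1,…,k}`. -/
noncomputable def MAG {V : Type*} (G : SimpleGraph V) : ℕ :=
  sInf {k | ∃ f : V → ℕ, Function.Injective f ∧ (∀ v, f v ∈ Finset.Icc 1 k) ∧ IsAntimagic G f}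

open Finset

open scoped Classical in
/-- The set of edges with both endpoints in `s`. -/
noncomputable def ESet {V : Type*} [Fintype V] [DecidableEq V] (G : SimpleGraph V)
    [DecidableRel G.Adj] (s : Finset V) : Finset (Sym2 V) :=
  G.edgeFinset.filter (fun e => ∀ x ∈ e, x ∈ s)

lemma mem_ESet {V : Type*} [Fintype V] [DecidableEq V] {G : SimpleGraph V}
    [DecidableRel G.Adj] {s : Finset V} {x y : V} (h : G.Adj x y) (hx : x ∈ s) (hy : y ∈ s) :
    s(x, y) ∈ ESet G s := by
  classical
  rw [ESet, Finset.mem_filter]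
  refine ⟨SimpleGraph.mem_edgeFinset.2 h, ?_⟩
  intro z hz
  rcases Sym2.mem_iff.1 hz with rfl | rfl <;> assumption

lemma ESet_mono {V : Type*} [Fintype V] [DecidableEq V] {G : SimpleGraph V}
    [DecidableRel G.Adj] {s t : Finset V} (h : s ⊆ t) : ESet G s ⊆ ESet G t := by
  classical
  apply Finset.monotone_filter_right
  intro e _ he z hz
  exact h (he z hz)

lemma aux_label {V : Type*} [Fintype V] [DecidableEq V] (G : SimpleGraph V)
    [DecidableRel G.Adj] (d : ℕ)
    (hdeg : ∀ s : Finset V, s.Nonempty → ∃ v ∈ s, (s.filter (fun w => G.Adj v w)).card ≤ d) :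
    ∀ s : Finset V, ∃ f : V → ℕ,
      Set.InjOn f s ∧ (∀ v ∈ s, f v ∈ Finset.Icc 1 (s.card + d * (ESet G s).card)) ∧
      (∀ p q x y : V, p ∈ s → q ∈ s → x ∈ s → y ∈ s → G.Adj p q → G.Adj x y →
        s(p, q) ≠ s(x, y) → f p + f q ≠ f x + f y) := by
  classical
  intro s
  induction s using Finset.strongInduction with
  | _ s ih =>
  rcases s.eq_empty_or_nonempty with rfl | hs
  · exact ⟨fun _ => 1, by simp [Set.InjOn], by simp, by simp⟩
  obtain ⟨v, hv, hvd⟩ := hdeg s hs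
  set s' := s.erase v with hs'
  have hss : s' ⊂ s := Finset.erase_ssubset hv
  obtain ⟨f, hinj, hrange, hanti⟩ := ih s' hss
  set K := s.card + d * (ESet G s).card with hK
  set N := s'.filter (fun w => G.Adj v w) with hN
  have hNd : N.card ≤ d := by
    refine le_trans (Finset.card_le_card ?_) hvd
    intro u hu
    rw [hN, Finset.mem_filter] at hu
    exact Finset.mem_filter.2 ⟨Finset.mem_of_mem_erase hu.1, hu.2⟩
  -- the forbidden set
  set sumf : Sym2 V → ℕ := Sym2.lift ⟨fun x y => f x + f y, fun x y => by ring⟩ with hsumf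
  set F : Finset ℕ := s'.image f ∪ (N ×ˢ (ESet G s')).image (fun p => sumf p.2 - f p.1)
    with hF
  have hK'le : s'.card + d * (ESet G s').card ≤ K := by
    have h1 : s'.card ≤ s.card := Finset.card_le_card hss.subset
    have h2 : (ESet G s').card ≤ (ESet G s).card :=
      Finset.card_le_card (ESet_mono hss.subset)
    exact Nat.add_le_add h1 (Nat.mul_le_mul_left d h2)
  have hFcard : F.card < K := by
    have h1 : (s'.image f).card ≤ s'.card := Finset.card_image_le
    have h2 : ((N ×ˢ (ESet G s')).image (fun p => sumf p.2 - f p.1)).card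
        ≤ N.card * (ESet G s').card := by
      refine le_trans Finset.card_image_le ?_
      rw [Finset.card_product]
    have h3 : s'.card < s.card := Finset.card_lt_card hss
    have h4 : N.card * (ESet G s').card ≤ d * (ESet G s).card :=
      Nat.mul_le_mul hNd (Finset.card_le_card (ESet_mono hss.subset))
    calc F.card ≤ (s'.image f).card
          + ((N ×ˢ (ESet G s')).image (fun p => sumf p.2 - f p.1)).card :=
        Finset.card_union_le _ _
      _ ≤ s'.card + d * (ESet G s).card := Nat.add_le_add h1 (le_trans h2 h4)
      _ < K := by rw [hK]; omega
  have hIcc : (Finset.Icc 1 K).card = K := by rw [Nat.card_Icc]; omega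
  obtain ⟨a, haI, haF⟩ : ∃ a ∈ Finset.Icc 1 K, a ∉ F := by
    by_contra h
    push_neg at h
    have := Finset.card_le_card h
    omega
  set g := Function.update f v a with hg
  have hgv : g v = a := Function.update_self v a f
  have hgne : ∀ u : V, u ≠ v → g u = f u := fun u hu => Function.update_of_ne hu a f
  have hafu : ∀ u ∈ s', a ≠ f u := by
    intro u hu heq
    exact haF (Finset.mem_union_left _ (Finset.mem_image.2 ⟨u, hu, heq.symm⟩))
  -- the mixed case
  have mixed : ∀ u ∈ N, ∀ x y : V, x ∈ s' → y ∈ s' → G.Adj x y → a + f u ≠ f x + f y := by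
    intro u hu x y hx hy hxy heq
    have hmem : (u, s(x, y)) ∈ N ×ˢ (ESet G s') :=
      Finset.mem_product.2 ⟨hu, mem_ESet hxy hx hy⟩
    have hsum : sumf s(x, y) = f x + f y := rfl
    have : a = sumf s(x, y) - f u := by rw [hsum]; omega
    exact haF (Finset.mem_union_right _ (Finset.mem_image.2 ⟨(u, s(x, y)), hmem, this.symm⟩))
  -- normalization of edges
  have norm : ∀ p q : V, p ∈ s → q ∈ s → G.Adj p q →
      (p ∈ s' ∧ q ∈ s' ∧ g p + g q = f p + f q) ∨
      (∃ u ∈ N, s(p, q) = s(v, u) ∧ g p + g q = a + f u) := by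
    intro p q hp hq hpq
    by_cases hpv : p = v
    · have hqv : q ≠ v := fun h => G.loopless.irrefl v (by rw [hpv, h] at hpq; exact hpq)
      have hq' : q ∈ s' := Finset.mem_erase.2 ⟨hqv, hq⟩
      exact Or.inr ⟨q, Finset.mem_filter.2 ⟨hq', hpv ▸ hpq⟩, by rw [hpv],
        by rw [hpv, hgv, hgne q hqv]⟩
    · by_cases hqv : q = v
      · have hp' : p ∈ s' := Finset.mem_erase.2 ⟨hpv, hp⟩
        exact Or.inr ⟨p, Finset.mem_filter.2 ⟨hp', hqv ▸ hpq.symm⟩,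
          by rw [hqv]; exact Sym2.eq_swap,
          by rw [hqv, hgv, hgne p hpv]; ring⟩
      · exact Or.inl ⟨Finset.mem_erase.2 ⟨hpv, hp⟩, Finset.mem_erase.2 ⟨hqv, hq⟩,
          by rw [hgne p hpv, hgne q hqv]⟩
  refine ⟨g, ?_, ?_, ?_⟩
  · -- injectivity
    intro x hx y hy hxy
    simp only [Finset.coe_mem, Finset.mem_coe] at hx hy
    by_cases hxv : x = v
    · by_cases hyv : y = v
      · rw [hxv, hyv]
      · exfalso
        rw [hxv, hgv, hgne y hyv] at hxy
        exact hafu y (Finset.mem_erase.2 ⟨hyv, hy⟩) hxy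
    · by_cases hyv : y = v
      · exfalso
        rw [hyv, hgv, hgne x hxv] at hxy
        exact hafu x (Finset.mem_erase.2 ⟨hxv, hx⟩) hxy.symm
      · rw [hgne x hxv, hgne y hyv] at hxy
        exact hinj (Finset.mem_erase.2 ⟨hxv, hx⟩) (Finset.mem_erase.2 ⟨hyv, hy⟩) hxy
  · -- range
    intro u hu
    by_cases huv : u = v
    · rw [huv, hgv]; exact haI
    · rw [hgne u huv]
      have := hrange u (Finset.mem_erase.2 ⟨huv, hu⟩)
      rw [Finset.mem_Icc] at this ⊢
      exact ⟨this.1, le_trans this.2 hK'le⟩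
  · -- antimagic
    intro p q x y hp hq hx hy hpq hxy hne
    rcases norm p q hp hq hpq with ⟨hp', hq', he1⟩ | ⟨u1, hu1, he1, hs1⟩ <;>
      rcases norm x y hx hy hxy with ⟨hx', hy', he2⟩ | ⟨u2, hu2, he2, hs2⟩
    · rw [he1, he2]
      exact hanti p q x y hp' hq' hx' hy' hpq hxy hne
    · rw [he1, hs2]
      have hu2' : u2 ∈ s' := (Finset.mem_filter.1 hu2).1
      have hadj2 : G.Adj v u2 := (Finset.mem_filter.1 hu2).2
      exact fun h => mixed u2 hu2 p q hp' hq' hpq h.symm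
    · rw [hs1, he2]
      exact mixed u1 hu1 x y hx' hy' hxy
    · rw [hs1, hs2]
      have hune : u1 ≠ u2 := by
        intro h
        exact hne (he1.trans (h ▸ he2.symm))
      have hu1' : u1 ∈ s' := (Finset.mem_filter.1 hu1).1
      have hu2' : u2 ∈ s' := (Finset.mem_filter.1 hu2).1
      intro h
      exact hune (hinj hu1' hu2' (by omega))

/-- Every `n`-vertex `m`-edge graph of degeneracy at most `d` (every nonempty induced
subgraph has a vertex of degree at most `d`) satisfies `MAG(G) ≤ n + d·m`. -/
theorem mag_le_of_degeneracy {V : Type*} [Fintype V] [DecidableEq V] (G : SimpleGraph V)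
    [DecidableRel G.Adj] (d : ℕ)
    (hdeg : ∀ s : Finset V, s.Nonempty → ∃ v ∈ s, (s.filter (fun w => G.Adj v w)).card ≤ d) :
    MAG G ≤ Fintype.card V + d * G.edgeFinset.card := by
  classical
  obtain ⟨f, hinj, hrange, hanti⟩ := aux_label G d hdeg Finset.univ
  have hE : ESet G (Finset.univ : Finset V) = G.edgeFinset := by
    rw [ESet]
    exact Finset.filter_true_of_mem (fun e _ => fun x _ => Finset.mem_univ x)
  have hcard : (Finset.univ : Finset V).card = Fintype.card V := rfl
  apply Nat.sInf_le
  refine ⟨f, ?_, ?_, ?_⟩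
  · intro x y h
    exact hinj (by simp) (by simp) h
  · intro u
    have := hrange u (Finset.mem_univ u)
    rwa [hcard, hE] at this
  · intro p q x y hpq hxy hne
    exact hanti p q x y (Finset.mem_univ p) (Finset.mem_univ q) (Finset.mem_univ x)
      (Finset.mem_univ y) hpq hxy hne
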